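/- Let p be prime, n a positive integer, and Q ∈ ℤ[X₁,...,Xₙ] a quadratic form. Then R(ℕ ∩ Q(ℤ^n)) is dense in ℚ_p if and only if R(Q(ℤ^n)) is dense in ℚ_p and Q(ℤ^n) contains a positive integer. -/

import Mathlib

def quotSet {K : Type*} [DivisionRing K] (A : Set K) : Set K :=
  {x | ∃ a ∈ A, ∃ b ∈ A, b ≠ 0 ∧ x = a / b}

lemma quotSet_mono {K : Type*} [DivisionRing K] {A B : Set K} (h : A ⊆ B) :
    quotSet A ⊆ quotSet B := by
  rintro x ⟨a, ha, b, hb, hb0, rfl⟩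
  exact ⟨a, h ha, b, h hb, hb0, rfl⟩

lemma qsmul {n:ℕ}(Q : QuadraticForm ℤ (Fin n → ℤ)) (a:ℤ)(x : Fin n → ℤ) : Q (a • x) = a*a*Q x := by
  rw [QuadraticMap.map_smul, smul_eq_mul]

lemma qadd {n:ℕ}(Q : QuadraticForm ℤ (Fin n → ℤ)) (k:ℤ)(x y: Fin n → ℤ) :
    Q (x + k • y) = Q x + k * QuadraticMap.polar Q x y + k^2 * Q y := by
  have h : Q (x + k • y) = Q x + Q (k • y) + QuadraticMap.polar Q x (k • y) := by
    simp [QuadraticMap.polar]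
  rw [h, QuadraticMap.polar_smul_right, qsmul, smul_eq_mul]; ring

lemma pos_aux (a B c m : ℤ) (hc : 1 ≤ c) (hm : 1 ≤ m) :
    0 < a + m * (|a| + |B| + 1) * B + (m * (|a| + |B| + 1))^2 * c := by
  set s : ℤ := |a| + |B| + 1 with hs
  have hB0 := abs_nonneg B
  have ha0 := abs_nonneg a
  have hs1 : 1 ≤ s := by omega
  have h1 : s ≤ m*s := le_mul_of_one_le_left (by omega) hm
  have hms0 : (0:ℤ) < m*s := by nlinarith
  have e1 : (m*s)*(|B|+1) ≤ (m*s)*s := by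
    apply mul_le_mul_of_nonneg_left (by omega) hms0.le
  have e2 : (m*s)*s ≤ (m*s)*(m*s) := mul_le_mul_of_nonneg_left h1 hms0.le
  have e3 : (m*s)*(m*s) ≤ (m*s)^2 * c := by nlinarith [sq_nonneg (m*s)]
  have e4 : -(m*s*|B|) ≤ m*s*B := by nlinarith [neg_abs_le B]
  have e5 : -a ≤ |a| := neg_le_abs a
  nlinarith

lemma approx_pos (p : ℕ) [Fact p.Prime] {n : ℕ} (Q : QuadraticForm ℤ (Fin n → ℤ))
    {v₀ : Fin n → ℤ} (hv₀ : 0 < Q v₀) (u : Fin n → ℤ) {ε : ℝ} (hε : 0 < ε) :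
    ∃ w : Fin n → ℤ, 0 < Q w ∧ ‖((Q w : ℤ) : ℚ_[p]) - ((Q u : ℤ) : ℚ_[p])‖ < ε := by
  obtain ⟨M, hM⟩ : ∃ M : ℕ, ‖(p : ℚ_[p])‖^M < ε :=
    exists_pow_lt_of_lt_one hε Padic.norm_p_lt_one
  set a := Q u with ha
  set B := QuadraticMap.polar Q u v₀ with hB
  set c := Q v₀ with hc
  set m : ℤ := (p:ℤ)^M with hmdef
  have hp1 : (1:ℤ) ≤ (p:ℤ) := by exact_mod_cast (Fact.out : p.Prime).one_lt.le
  have hm : 1 ≤ m := one_le_pow₀ hp1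
  set s : ℤ := |a| + |B| + 1 with hs
  refine ⟨u + (m*s) • v₀, ?_, ?_⟩
  · rw [qadd]
    exact pos_aux a B c m hv₀ hm
  · rw [qadd]
    have heq : ((a + m*s*B + (m*s)^2*c : ℤ) : ℚ_[p]) - ((a:ℤ):ℚ_[p])
        = ((m : ℤ):ℚ_[p]) * ((s*B + m*s^2*c : ℤ):ℚ_[p]) := by push_cast; ring
    rw [heq, norm_mul]
    have h1 : ‖((m:ℤ):ℚ_[p])‖ = ‖(p:ℚ_[p])‖^M := by
      rw [hmdef]; push_cast; rw [norm_pow]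
    have h2 : ‖((s*B + m*s^2*c : ℤ):ℚ_[p])‖ ≤ 1 := Padic.norm_int_le_one _
    calc ‖((m:ℤ):ℚ_[p])‖ * ‖((s*B + m*s^2*c : ℤ):ℚ_[p])‖
        ≤ ‖((m:ℤ):ℚ_[p])‖ * 1 := mul_le_mul_of_nonneg_left h2 (norm_nonneg _)
      _ = ‖(p:ℚ_[p])‖^M := by rw [mul_one, h1]
      _ < ε := hM

lemma ratio_close {p : ℕ} [Fact p.Prime] (a b a' b' : ℚ_[p]) (hb : b ≠ 0) (hb' : b' ≠ 0)
    {ε : ℝ} (hε : 0 < ε)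
    (h1 : ‖a' - a‖ < min (‖b‖/2) (ε * ‖b‖^2 / (2*(‖a‖ + ‖b‖ + 1))))
    (h2 : ‖b' - b‖ < min (‖b‖/2) (ε * ‖b‖^2 / (2*(‖a‖ + ‖b‖ + 1)))) :
    ‖a/b - a'/b'‖ < ε := by
  set δ := min (‖b‖/2) (ε * ‖b‖^2 / (2*(‖a‖ + ‖b‖ + 1))) with hδ
  have hnb : 0 < ‖b‖ := norm_pos_iff.mpr hb
  have hnb' : 0 < ‖b'‖ := norm_pos_iff.mpr hb'
  have hbge : ‖b‖/2 ≤ ‖b'‖ := by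
    have h3 : ‖b‖ - ‖b'‖ ≤ ‖b - b'‖ := norm_sub_norm_le _ _
    have h4 : ‖b - b'‖ = ‖b' - b‖ := norm_sub_rev _ _
    have h5 : ‖b' - b‖ ≤ ‖b‖/2 := le_of_lt (lt_of_lt_of_le h2 (min_le_left _ _))
    linarith
  have hkey : a/b - a'/b' = (a*(b'-b) - (a'-a)*b)/(b*b') := by
    field_simp; ring
  rw [hkey, norm_div, norm_mul]
  rw [div_lt_iff₀ (by positivity)]
  have hnum : ‖a*(b'-b) - (a'-a)*b‖ ≤ ‖a‖*‖b'-b‖ + ‖a'-a‖*‖b‖ := by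
    calc ‖a*(b'-b) - (a'-a)*b‖ ≤ ‖a*(b'-b)‖ + ‖(a'-a)*b‖ := norm_sub_le _ _
      _ = ‖a‖*‖b'-b‖ + ‖a'-a‖*‖b‖ := by rw [norm_mul, norm_mul]
  have hδ2 : δ ≤ ε * ‖b‖^2 / (2*(‖a‖ + ‖b‖ + 1)) := min_le_right _ _
  have hna : 0 ≤ ‖a‖ := norm_nonneg a
  have hnum2 : ‖a‖*‖b'-b‖ + ‖a'-a‖*‖b‖ < δ * (‖a‖ + ‖b‖ + 1) := by
    have hδ0 : 0 < δ := lt_of_le_of_lt (norm_nonneg _) h2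
    nlinarith [norm_nonneg (a'-a), norm_nonneg (b'-b)]
  have hδ3 : δ * (‖a‖ + ‖b‖ + 1) ≤ ε * ‖b‖^2 / 2 := by
    have h2' := (le_div_iff₀ (by positivity : (0:ℝ) < 2*(‖a‖+‖b‖+1))).mp hδ2
    rw [le_div_iff₀ (by norm_num : (0:ℝ) < 2)]
    nlinarith
  have hbb : ‖b‖^2/2 ≤ ‖b‖*‖b'‖ := by nlinarith
  have hfin : ε * ‖b‖^2 / 2 ≤ ε * (‖b‖ * ‖b'‖) := by
    nlinarith [mul_le_mul_of_nonneg_left hbb hε.le]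
  linarith

theorem stmt17 (p : ℕ) [Fact p.Prime] (n : ℕ) (hn : 0 < n)
    (Q : QuadraticForm ℤ (Fin n → ℤ)) :
    Dense (quotSet {y : ℚ_[p] | ∃ v : Fin n → ℤ, 0 ≤ Q v ∧ ((Q v : ℤ) : ℚ_[p]) = y}) ↔
    (Dense (quotSet {y : ℚ_[p] | ∃ v : Fin n → ℤ, ((Q v : ℤ) : ℚ_[p]) = y}) ∧
      ∃ v : Fin n → ℤ, 0 < Q v) := by
  constructor
  · intro h
    constructor
    · refine h.mono (quotSet_mono ?_)
      rintro y ⟨v, _, hv⟩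
      exact ⟨v, hv⟩
    · by_contra hne
      push_neg at hne
      obtain ⟨x, a, ha, b, ⟨w, hw0, hb⟩, hb0, _⟩ := h.nonempty
      have hQw : Q w = 0 := le_antisymm (hne w) hw0
      apply hb0
      rw [← hb, hQw]
      norm_num
  · rintro ⟨hd, v₀, hv₀⟩
    have hsub : quotSet {y : ℚ_[p] | ∃ v : Fin n → ℤ, ((Q v : ℤ) : ℚ_[p]) = y} ⊆
        closure (quotSet {y : ℚ_[p] | ∃ v : Fin n → ℤ, 0 ≤ Q v ∧ ((Q v : ℤ) : ℚ_[p]) = y}) := by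
      rintro y ⟨a, ⟨u, rfl⟩, b, ⟨w, rfl⟩, hbne, rfl⟩
      rw [Metric.mem_closure_iff]
      intro ε hε
      set a : ℚ_[p] := ((Q u : ℤ) : ℚ_[p]) with ha
      set b : ℚ_[p] := ((Q w : ℤ) : ℚ_[p]) with hb
      have hnb : 0 < ‖b‖ := norm_pos_iff.mpr hbne
      set δ := min (‖b‖/2) (ε * ‖b‖^2 / (2*(‖a‖ + ‖b‖ + 1))) with hδ
      have hδ0 : 0 < δ := lt_min (by positivity) (by positivity)
      obtain ⟨wa, hwa, hna'⟩ := approx_pos p Q hv₀ u hδ0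
      obtain ⟨wb, hwb, hnb'⟩ := approx_pos p Q hv₀ w hδ0
      have hwb0 : ((Q wb : ℤ) : ℚ_[p]) ≠ 0 := by
        exact_mod_cast Int.cast_ne_zero.mpr hwb.ne'
      refine ⟨((Q wa : ℤ) : ℚ_[p]) / ((Q wb : ℤ) : ℚ_[p]),
        ⟨((Q wa : ℤ) : ℚ_[p]), ⟨wa, hwa.le, rfl⟩, ((Q wb : ℤ) : ℚ_[p]), ⟨wb, hwb.le, rfl⟩,
          hwb0, rfl⟩, ?_⟩
      rw [dist_eq_norm]
      exact ratio_close a b _ _ hbne hwb0 hε hna' hnb'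
    rw [dense_iff_closure_eq] at hd ⊢
    apply Set.eq_univ_of_univ_subset
    have h2 := closure_mono hsub
    rw [closure_closure, hd] at h2
    exact h2
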